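/- Let A be a measurable space, μ a probability measure on A, r : A → ℝ a bounded measurable function, and β > 0. Set Z = ∫ exp(r(a)/β) dμ(a) and let g be the Gibbs measure with density exp(r/β)/Z with respect to μ. If a probability measure p on A with p ≪ μ and KL(p‖μ) < ∞ satisfies ∫ r dp − β·KL(p‖μ) = β·log Z, then p = g; that is, the maximizer of the KL-regularized expected reward is unique and equals the Gibbs measure. -/

import Mathlib

open MeasureTheory Real
open scoped ENNReal Classical

lemma mul_log_lower {t : ℝ} (ht : 0 ≤ t) : t - 1 ≤ t * Real.log t := by
  rcases eq_or_lt_of_le ht with h | h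
  · simp [← h]
  · have h1 : Real.log t⁻¹ ≤ t⁻¹ - 1 := Real.log_le_sub_one_of_pos (by positivity)
    rw [Real.log_inv] at h1
    nlinarith [mul_le_mul_of_nonneg_left h1 ht, mul_inv_cancel₀ h.ne']

lemma mul_log_eq_iff {t : ℝ} (ht : 0 ≤ t) (heq : t * Real.log t - t + 1 = 0) : t = 1 := by
  rcases eq_or_lt_of_le ht with h | h
  · simp [← h] at heq
  · by_contra hne
    have h1 : Real.log t⁻¹ < t⁻¹ - 1 :=
      Real.log_lt_sub_one_of_pos (by positivity) (by simp [hne])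
    rw [Real.log_inv] at h1
    nlinarith [mul_lt_mul_of_pos_left h1 h, mul_inv_cancel₀ h.ne']

lemma eq_of_integral_llr_eq_zero {α : Type*} [MeasurableSpace α] (p g : Measure α)
    [IsProbabilityMeasure p] [IsProbabilityMeasure g] (hpg : p ≪ g)
    (hint : Integrable (llr p g) p) (h0 : ∫ x, llr p g x ∂p = 0) : p = g := by
  set φ : α → ℝ := fun x => (p.rnDeriv g x).toReal with hφ
  have hφint : Integrable φ g := Measure.integrable_toReal_rnDeriv
  have hφ1 : ∫ x, φ x ∂g = 1 := by
    rw [Measure.integral_toReal_rnDeriv hpg]; simp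
  have hsmul : ∫ x, φ x * llr p g x ∂g = ∫ x, llr p g x ∂p := by
    simpa [smul_eq_mul] using integral_rnDeriv_smul hpg (f := llr p g)
  have hint2 : Integrable (fun x => φ x * llr p g x) g := by
    simpa [smul_eq_mul] using (integrable_rnDeriv_smul_iff hpg (f := llr p g)).2 hint
  set h : α → ℝ := fun x => φ x * llr p g x - φ x + 1 with hh
  have hhint : Integrable h g := (hint2.sub hφint).add (integrable_const 1)
  have hhnn : 0 ≤ h := by
    intro x
    have h1 := mul_log_lower (t := φ x) ENNReal.toReal_nonneg
    have : llr p g x = Real.log (φ x) := rfl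
    simp only [hh, Pi.zero_apply, this]
    linarith
  have hhz : ∫ x, h x ∂g = 0 := by
    have e1 : ∫ x, h x ∂g
        = ∫ x, (φ x * llr p g x - φ x) ∂g + ∫ _, (1:ℝ) ∂g :=
      integral_add (hint2.sub hφint) (integrable_const 1)
    rw [e1, integral_sub hint2 hφint, hsmul, h0, hφ1]
    simp
  have hae : h =ᵐ[g] 0 := by
    rw [← integral_eq_zero_iff_of_nonneg hhnn hhint]
    exact hhz
  have hφae : p.rnDeriv g =ᵐ[g] 1 := by
    filter_upwards [hae] with x hx
    have hx' : φ x * Real.log (φ x) - φ x + 1 = 0 := by simpa [hh, show llr p g x = Real.log (φ x) from rfl] using hx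
    have : φ x = 1 := mul_log_eq_iff ENNReal.toReal_nonneg hx'
    simpa [hφ, ENNReal.toReal_eq_one_iff] using this
  calc p = g.withDensity (p.rnDeriv g) := (Measure.withDensity_rnDeriv_eq p g hpg).symm
    _ = g.withDensity 1 := withDensity_congr_ae hφae
    _ = g := by simp

/-- Kullback–Leibler divergence, valued in the extended reals: equal to `∫ log (dp/dμ) dp`
when `p ≪ μ` and this integral exists, and `+∞` otherwise. -/
noncomputable def KL {α : Type*} [MeasurableSpace α] (p μ : Measure α) : EReal :=
  if p ≪ μ ∧ Integrable (llr p μ) p then ((∫ a, llr p μ a ∂p : ℝ) : EReal) else ⊤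

/-- Uniqueness of the maximizer of the KL-regularized expected reward: if a probability
measure `p ≪ μ` with finite `KL(p‖μ)` attains the optimal value `β·log Z`, then `p`
equals the Gibbs measure `g` with density `exp(r/β)/Z` with respect to `μ`. -/
theorem unique_maximizer_of_klRegValue
    {A : Type*} [MeasurableSpace A] (μ : Measure A) [IsProbabilityMeasure μ]
    (r : A → ℝ) (hrmeas : Measurable r) (B : ℝ) (hrbdd : ∀ a, |r a| ≤ B)
    (β : ℝ) (hβ : 0 < β)
    (Z : ℝ) (hZ : Z = ∫ a, Real.exp (r a / β) ∂μ)
    (g : Measure A)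
    (hg : g = μ.withDensity (fun a => ENNReal.ofReal (Real.exp (r a / β) / Z)))
    (p : Measure A) (hp : IsProbabilityMeasure p) (hpac : p ≪ μ)
    (hfin : KL p μ < ⊤)
    (hopt : ((∫ a, r a ∂p : ℝ) : EReal) - ((β : ℝ) : EReal) * KL p μ
      = ((β * Real.log Z : ℝ) : EReal)) :
    p = g := by
  haveI := hp
  -- integrability of exp(r/β) w.r.t. μ
  have hexpmeas : Measurable fun a => Real.exp (r a / β) :=
    (Real.measurable_exp.comp (hrmeas.div_const β))
  have hexpbdd : ∀ a, ‖Real.exp (r a / β)‖ ≤ Real.exp (B / β) := by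
    intro a
    rw [Real.norm_eq_abs, abs_of_pos (Real.exp_pos _)]
    exact Real.exp_le_exp.2 (by gcongr; exact (abs_le.1 (hrbdd a)).2)
  have hZint : Integrable (fun a => Real.exp (r a / β)) μ :=
    (integrable_const (Real.exp (B / β))).mono' hexpmeas.aestronglyMeasurable
      (Filter.Eventually.of_forall hexpbdd)
  -- g is the tilted measure
  have hgt : g = μ.tilted (fun a => r a / β) := by
    rw [hg, Measure.tilted, hZ]
  haveI hgprob : IsProbabilityMeasure g := by
    rw [hgt]; exact isProbabilityMeasure_tilted hZint
  -- KL is finite: extract integrability and value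
  have hintμ : Integrable (llr p μ) p := by
    by_contra hcon
    rw [KL, if_neg (fun hc => hcon hc.2)] at hfin
    exact absurd hfin (lt_irrefl _)
  have hKL : KL p μ = ((∫ a, llr p μ a ∂p : ℝ) : EReal) := by
    rw [KL, if_pos ⟨hpac, hintμ⟩]
  -- real form of the optimality equation
  have hrint : Integrable r p :=
    (integrable_const B).mono' hrmeas.aestronglyMeasurable
      (Filter.Eventually.of_forall fun a => by simpa using hrbdd a)
  have hreal : ∫ a, r a ∂p - β * ∫ a, llr p μ a ∂p = β * Real.log Z := by
    rw [hKL] at hopt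
    exact_mod_cast hopt
  -- p ≪ g
  have hpg : p ≪ g := hgt ▸ hpac.trans (absolutelyContinuous_tilted hZint)
  have hfμ : Integrable (fun a => r a / β) p := hrint.div_const β
  -- key integral computation
  have hllrg : ∫ a, llr p g a ∂p = 0 := by
    rw [hgt, integral_llr_tilted_right hpac hfμ hZint hintμ, ← hZ]
    have : ∫ a, r a / β ∂p = (∫ a, r a ∂p) / β := integral_div β r
    rw [this]
    have hβne : β ≠ 0 := hβ.ne'
    field_simp
    linarith [hreal]
  have hintg : Integrable (llr p g) p := by
    rw [hgt]
    exact integrable_llr_tilted_right hpac hfμ hintμ hZint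
  exact eq_of_integral_llr_eq_zero p g hpg hintg hllrg
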